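/- arXiv:2303.17507 — 3 statements merged into one kernel-verified Lean document; each statement's English description precedes it below -/
import Mathlib

section
/- In ℂ³ ⊗ ℂ³, let a₁, a₂, a₃ > 0 with a₁² + a₂² + a₃² = 1 and let |ψ⟩ = a₁|0⟩⊗|0⟩ + a₂|1⟩⊗|1⟩ + a₃|2⟩⊗|2⟩. Then the eight product vectors (a₂|0⟩ − a₁|1⟩)⊗(|0⟩+|1⟩), |0⟩⊗|1⟩, |1⟩⊗|0⟩, (a₃|0⟩ − a₁|2⟩)⊗(|0⟩+|2⟩), |0⟩⊗|2⟩, |2⟩⊗|0⟩, |1⟩⊗|2⟩, |2⟩⊗|1⟩ are each orthogonal to |ψ⟩, are linearly independent, and span the orthogonal complement of |ψ⟩ in ℂ³ ⊗ ℂ³. -/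
open scoped ComplexConjugate

/-- The product (tensor) vector u ⊗ w in ℂ^{d₁} ⊗ ℂ^{d₂} ≅ ℂ^{d₁·d₂}. -/
noncomputable def tp {d₁ d₂ : ℕ} (u : EuclideanSpace ℂ (Fin d₁))
    (w : EuclideanSpace ℂ (Fin d₂)) : EuclideanSpace ℂ (Fin d₁ × Fin d₂) :=
  WithLp.toLp 2 (fun p : Fin d₁ × Fin d₂ => u p.1 * w p.2)

/-- The standard basis vector |i⟩ of ℂ³. -/
noncomputable def e (i : Fin 3) : EuclideanSpace ℂ (Fin 3) := EuclideanSpace.single i 1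

/-- the eight product vectors are orthogonal to ψ, linearly
independent, and span the orthogonal complement of ψ in ℂ³ ⊗ ℂ³. -/
theorem stmt4 (a₁ a₂ a₃ : ℝ) (h₁ : 0 < a₁) (h₂ : 0 < a₂) (h₃ : 0 < a₃)
    (hn : a₁ ^ 2 + a₂ ^ 2 + a₃ ^ 2 = 1)
    (ψ : EuclideanSpace ℂ (Fin 3 × Fin 3))
    (hψ : ψ = (a₁ : ℂ) • tp (e 0) (e 0) + (a₂ : ℂ) • tp (e 1) (e 1)
            + (a₃ : ℂ) • tp (e 2) (e 2))
    (v : Fin 8 → EuclideanSpace ℂ (Fin 3 × Fin 3))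
    (hv : v = ![tp ((a₂ : ℂ) • e 0 - (a₁ : ℂ) • e 1) (e 0 + e 1),
                tp (e 0) (e 1), tp (e 1) (e 0),
                tp ((a₃ : ℂ) • e 0 - (a₁ : ℂ) • e 2) (e 0 + e 2),
                tp (e 0) (e 2), tp (e 2) (e 0),
                tp (e 1) (e 2), tp (e 2) (e 1)]) :
    (∀ i, inner ℂ (v i) ψ = (0 : ℂ)) ∧ LinearIndependent ℂ v ∧
      Submodule.span ℂ (Set.range v) = (ℂ ∙ ψ)ᗮ := by
  have ha1 : (a₁ : ℂ) ≠ 0 := by exact_mod_cast h₁.ne'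
  have hv0 : v 0 = tp ((a₂ : ℂ) • e 0 - (a₁ : ℂ) • e 1) (e 0 + e 1) := by rw [hv]; rfl
  have hv1 : v 1 = tp (e 0) (e 1) := by rw [hv]; rfl
  have hv2 : v 2 = tp (e 1) (e 0) := by rw [hv]; rfl
  have hv3 : v 3 = tp ((a₃ : ℂ) • e 0 - (a₁ : ℂ) • e 2) (e 0 + e 2) := by rw [hv]; rfl
  have hv4 : v 4 = tp (e 0) (e 2) := by rw [hv]; rfl
  have hv5 : v 5 = tp (e 2) (e 0) := by rw [hv]; rfl
  have hv6 : v 6 = tp (e 1) (e 2) := by rw [hv]; rfl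
  have hv7 : v 7 = tp (e 2) (e 1) := by rw [hv]; rfl
  clear hv
  have o0 : inner ℂ (v 0) ψ = (0:ℂ) := by
    rw [hv0, hψ]
    simp [tp, e, PiLp.inner_apply, Fintype.sum_prod_type, Fin.sum_univ_three,
      EuclideanSpace.single_apply, Complex.conj_ofReal]
    ring
  have o1 : inner ℂ (v 1) ψ = (0:ℂ) := by
    rw [hv1, hψ]
    simp [tp, e, PiLp.inner_apply, Fintype.sum_prod_type, Fin.sum_univ_three,
      EuclideanSpace.single_apply, Complex.conj_ofReal]
  have o2 : inner ℂ (v 2) ψ = (0:ℂ) := by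
    rw [hv2, hψ]
    simp [tp, e, PiLp.inner_apply, Fintype.sum_prod_type, Fin.sum_univ_three,
      EuclideanSpace.single_apply, Complex.conj_ofReal]
  have o3 : inner ℂ (v 3) ψ = (0:ℂ) := by
    rw [hv3, hψ]
    simp [tp, e, PiLp.inner_apply, Fintype.sum_prod_type, Fin.sum_univ_three,
      EuclideanSpace.single_apply, Complex.conj_ofReal]
    ring
  have o4 : inner ℂ (v 4) ψ = (0:ℂ) := by
    rw [hv4, hψ]
    simp [tp, e, PiLp.inner_apply, Fintype.sum_prod_type, Fin.sum_univ_three,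
      EuclideanSpace.single_apply, Complex.conj_ofReal]
  have o5 : inner ℂ (v 5) ψ = (0:ℂ) := by
    rw [hv5, hψ]
    simp [tp, e, PiLp.inner_apply, Fintype.sum_prod_type, Fin.sum_univ_three,
      EuclideanSpace.single_apply, Complex.conj_ofReal]
  have o6 : inner ℂ (v 6) ψ = (0:ℂ) := by
    rw [hv6, hψ]
    simp [tp, e, PiLp.inner_apply, Fintype.sum_prod_type, Fin.sum_univ_three,
      EuclideanSpace.single_apply, Complex.conj_ofReal]
  have o7 : inner ℂ (v 7) ψ = (0:ℂ) := by
    rw [hv7, hψ]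
    simp [tp, e, PiLp.inner_apply, Fintype.sum_prod_type, Fin.sum_univ_three,
      EuclideanSpace.single_apply, Complex.conj_ofReal]
  have horth : ∀ i, inner ℂ (v i) ψ = (0 : ℂ) := by
    intro i
    fin_cases i
    exacts [o0, o1, o2, o3, o4, o5, o6, o7]
  have hli : LinearIndependent ℂ v := by
    rw [Fintype.linearIndependent_iff]
    intro g hg
    have key : ∀ p : Fin 3 × Fin 3, g 0 * v 0 p + g 1 * v 1 p + g 2 * v 2 p + g 3 * v 3 p
        + g 4 * v 4 p + g 5 * v 5 p + g 6 * v 6 p + g 7 * v 7 p = 0 := by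
      intro p
      have := congrArg (fun x => x p) hg
      simpa [Fin.sum_univ_eight, Finset.sum_apply, PiLp.smul_apply, smul_eq_mul,
        add_assoc] using this
    have h01 := key (0,1); have h10 := key (1,0)
    have h11 := key (1,1); have h02 := key (0,2); have h20 := key (2,0)
    have h22 := key (2,2); have h12 := key (1,2); have h21 := key (2,1)
    simp only [hv0, hv1, hv2, hv3, hv4, hv5, hv6, hv7, tp, e,
      EuclideanSpace.single_apply, PiLp.sub_apply, PiLp.add_apply, PiLp.smul_apply,
      smul_eq_mul] at h01 h10 h11 h02 h20 h22 h12 h21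
    norm_num [Fin.ext_iff] at h01 h10 h11 h02 h20 h22 h12 h21
    have hg0 : g 0 = 0 := h11.resolve_right h₁.ne'
    have hg3 : g 3 = 0 := h22.resolve_right h₁.ne'
    intro i
    fin_cases i
    · exact hg0
    · rw [hg0] at h01; simpa using h01
    · rw [hg0] at h10; simpa using h10
    · exact hg3
    · rw [hg3] at h02; simpa using h02
    · rw [hg3] at h20; simpa using h20
    · simpa using h12
    · simpa using h21
  refine ⟨horth, hli, ?_⟩
  have hψne : ψ ≠ 0 := by
    intro h
    have h0 : ψ (0,0) = 0 := by rw [h]; rfl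
    rw [hψ] at h0
    simp [tp, e, EuclideanSpace.single_apply] at h0
    exact absurd h0 (by exact_mod_cast h₁.ne')
  have hle : Submodule.span ℂ (Set.range v) ≤ (ℂ ∙ ψ)ᗮ := by
    rw [Submodule.span_le]
    rintro _ ⟨i, rfl⟩
    rw [SetLike.mem_coe, Submodule.mem_orthogonal]
    intro u hu
    rcases Submodule.mem_span_singleton.mp hu with ⟨c, rfl⟩
    rw [inner_smul_left, inner_eq_zero_symm.mp (horth i), mul_zero]
  apply Submodule.eq_of_le_of_finrank_eq hle
  have hr1 : Module.finrank ℂ (Submodule.span ℂ (Set.range v)) = 8 := by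
    rw [finrank_span_eq_card hli]; simp
  have hr2 : Module.finrank ℂ ((ℂ ∙ ψ)ᗮ) = 8 := by
    have hsum := Submodule.finrank_add_finrank_orthogonal (K := ℂ ∙ ψ)
    rw [finrank_span_singleton hψne] at hsum
    have htot : Module.finrank ℂ (EuclideanSpace ℂ (Fin 3 × Fin 3)) = 9 := by simp
    omega
  rw [hr1, hr2]
end

section
/- Let S be a linear subspace of ℂ^{d₁} ⊗ ℂ^{d₂} containing no nonzero product vector (an entangled subspace). Then dim S ≤ (d₁ − 1)(d₂ − 1). -/
open scoped ComplexConjugate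

open MvPolynomial

namespace Stmt15Aux

abbrev σt (a b : ℕ) := Fin (a + 1) ⊕ Fin (b + 1)

abbrev PA (a b : ℕ) := MvPolynomial (σt a b) ℂ

def wt (a b : ℕ) : σt a b → ℤ := Sum.elim (fun _ => 1) (fun _ => -1)

def Bal {a b : ℕ} (f : PA a b) : Prop := IsWeightedHomogeneous (wt a b) f 0

noncomputable def gp {a b : ℕ} (α : Fin (a + 1)) (β : Fin (b + 1)) : PA a b :=
  X (Sum.inl α) * X (Sum.inr β)

theorem weight_eq_sub {a b : ℕ} (μ : σt a b →₀ ℕ) :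
    Finsupp.weight (wt a b) μ
      = (∑ p, (μ (Sum.inl p) : ℤ)) - ∑ q, (μ (Sum.inr q) : ℤ) := by
  rw [Finsupp.weight_apply, Finsupp.sum_fintype]
  · rw [Fintype.sum_sum_type]
    simp [wt, sub_eq_add_neg]
  · intro i; exact zero_smul ℕ _

theorem musum_eq {a b : ℕ} (μ : σt a b →₀ ℕ) :
    (μ.sum fun _ e => e)
      = (∑ p, μ (Sum.inl p)) + ∑ q, μ (Sum.inr q) := by
  rw [Finsupp.sum_fintype _ _ (fun s => rfl), Fintype.sum_sum_type]

theorem bal_iff {a b : ℕ} (μ : σt a b →₀ ℕ) :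
    Finsupp.weight (wt a b) μ = 0
      ↔ (∑ p, μ (Sum.inl p)) = ∑ q, μ (Sum.inr q) := by
  rw [weight_eq_sub, sub_eq_zero]
  exact_mod_cast Nat.cast_inj (R := ℤ)

theorem gp_eq_monomial {a b : ℕ} (α : Fin (a + 1)) (β : Fin (b + 1)) :
    gp α β = monomial (Finsupp.single (Sum.inl α) 1 + Finsupp.single (Sum.inr β) 1)
      (1 : ℂ) := by
  rw [gp, X, X, monomial_mul, one_mul]

theorem bal_gp {a b : ℕ} (α : Fin (a + 1)) (β : Fin (b + 1)) : Bal (gp α β) := by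
  rw [gp_eq_monomial]
  apply isWeightedHomogeneous_monomial
  show Finsupp.weight _ _ = _
  rw [map_add]
  show Finsupp.linearCombination ℕ (wt a b) _ + Finsupp.linearCombination ℕ (wt a b) _ = 0
  rw [Finsupp.linearCombination_single, Finsupp.linearCombination_single]
  simp [wt]

theorem hom_gp {a b : ℕ} (α : Fin (a + 1)) (β : Fin (b + 1)) :
    IsHomogeneous (gp α β) 2 := by
  rw [gp]
  have := (isHomogeneous_X ℂ (Sum.inl α : σt a b)).mul (isHomogeneous_X ℂ (Sum.inr β))
  exact this

theorem weightedHomogeneousComponent_mul_right {σ M : Type*} [DecidableEq σ]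
    [AddCancelCommMonoid M] [DecidableEq M] (w : σ → M) (x y : M)
    (f g : MvPolynomial σ ℂ) (hg : g.IsWeightedHomogeneous w y) :
    weightedHomogeneousComponent w (x + y) (f * g)
      = weightedHomogeneousComponent w x f * g := by
  ext μ
  rw [coeff_weightedHomogeneousComponent]
  split_ifs with h
  · rw [coeff_mul, coeff_mul]
    apply Finset.sum_congr rfl
    intro p hp
    rw [Finset.HasAntidiagonal.mem_antidiagonal] at hp
    by_cases hg2 : coeff p.2 g = 0
    · simp [hg2]
    · have hy : (Finsupp.weight w) p.2 = y := hg hg2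
      have hx : (Finsupp.weight w) p.1 = x := by
        have h2 : (Finsupp.weight w) p.1 + (Finsupp.weight w) p.2 = x + y := by
          rw [← map_add, hp, h]
        rw [hy] at h2
        exact add_right_cancel h2
      rw [coeff_weightedHomogeneousComponent, if_pos hx]
  · symm
    rw [coeff_mul]
    apply Finset.sum_eq_zero
    intro p hp
    rw [Finset.HasAntidiagonal.mem_antidiagonal] at hp
    by_cases hg2 : coeff p.2 g = 0
    · simp [hg2]
    · have hy : (Finsupp.weight w) p.2 = y := hg hg2
      have hx : (Finsupp.weight w) p.1 ≠ x := by
        intro hx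
        apply h
        rw [← hp, map_add, hx, hy]
      rw [coeff_weightedHomogeneousComponent, if_neg hx, zero_mul]

/-- The power of a product variable-pair monomial. -/
theorem gp_pow_eq_monomial {a b : ℕ} (α : Fin (a + 1)) (β : Fin (b + 1)) (n : ℕ) :
    gp α β ^ n = monomial (Finsupp.single (Sum.inl α) n + Finsupp.single (Sum.inr β) n)
      (1 : ℂ) := by
  rw [gp_eq_monomial, monomial_pow, one_pow, smul_add, Finsupp.smul_single,
    Finsupp.smul_single, smul_eq_mul, mul_one]

theorem weight_single_pair {a b : ℕ} (α : Fin (a + 1)) (β : Fin (b + 1)) (n : ℕ) :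
    Finsupp.weight (wt a b)
      (Finsupp.single (Sum.inl α : σt a b) n + Finsupp.single (Sum.inr β) n) = 0 := by
  rw [map_add]
  show Finsupp.linearCombination ℕ (wt a b) _ + Finsupp.linearCombination ℕ (wt a b) _ = 0
  rw [Finsupp.linearCombination_single, Finsupp.linearCombination_single]
  simp only [wt, Sum.elim_inl, Sum.elim_inr, smul_eq_mul]
  ring

theorem degw_single_pair {a b : ℕ} (α : Fin (a + 1)) (β : Fin (b + 1)) (n : ℕ) :
    Finsupp.weight (1 : σt a b → ℕ)
      (Finsupp.single (Sum.inl α : σt a b) n + Finsupp.single (Sum.inr β) n) = 2 * n := by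
  rw [map_add]
  show Finsupp.linearCombination ℕ (1 : σt a b → ℕ) _
    + Finsupp.linearCombination ℕ (1 : σt a b → ℕ) _ = 2 * n
  rw [Finsupp.linearCombination_single, Finsupp.linearCombination_single]
  simp only [Pi.one_apply, smul_eq_mul, mul_one]
  ring

theorem bal_component {a b : ℕ} {f : PA a b} (hf : Bal f) (k : ℕ) :
    Bal (weightedHomogeneousComponent (1 : σt a b → ℕ) k f) := by
  classical
  intro μ hμ
  rw [coeff_weightedHomogeneousComponent] at hμ
  by_cases h : Finsupp.weight (1 : σt a b → ℕ) μ = k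
  · rw [if_pos h] at hμ
    exact hf hμ
  · rw [if_neg h] at hμ
    exact absurd rfl hμ

theorem totalDegree_wcomponent_le {a b : ℕ} (f : PA a b) (k : ℕ) :
    (weightedHomogeneousComponent (1 : σt a b → ℕ) k f).totalDegree ≤ k := by
  classical
  apply Finset.sup_le
  intro μ hμ
  rw [mem_support_iff, coeff_weightedHomogeneousComponent] at hμ
  by_cases h : Finsupp.weight (1 : σt a b → ℕ) μ = k
  · have : μ.degree = k := by rw [Finsupp.degree_eq_weight_one]; exact h
    calc (μ.sum fun _ e => e) = μ.degree := rfl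
    _ = k := this
    _ ≤ k := le_rfl
  · rw [if_neg h] at hμ; exact absurd rfl hμ

theorem exists_hpow {a b c : ℕ} (bf : Fin c → PA a b)
    (hbal : ∀ j, Bal (bf j))
    (hhom : ∀ j, IsWeightedHomogeneous (1 : σt a b → ℕ) (bf j) 2)
    (hz : ∀ x : σt a b → ℂ, (∀ j, eval x (bf j) = 0) →
      (∀ p, x (Sum.inl p) = 0) ∨ (∀ q, x (Sum.inr q) = 0)) :
    ∃ N : ℕ, ∀ (α : Fin (a+1)) (β : Fin (b+1)), ∃ hh : Fin c → PA a b,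
      (∀ j, Bal (hh j)) ∧ (∀ j, (hh j).totalDegree ≤ 2 * N) ∧
      gp α β ^ (N + 1) = ∑ j, hh j * bf j := by
  classical
  set I : Ideal (PA a b) := Ideal.span (Set.range bf) with hI
  have hrad : ∀ (α : Fin (a+1)) (β : Fin (b+1)), ∃ n : ℕ, gp α β ^ n ∈ I := by
    intro α β
    have hv : gp α β ∈ vanishingIdeal ℂ (zeroLocus ℂ I) := by
      rw [mem_vanishingIdeal_iff]
      intro x hx
      rw [mem_zeroLocus_iff] at hx
      have hbz : ∀ j, eval x (bf j) = 0 := fun j =>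
        hx _ (Ideal.subset_span ⟨j, rfl⟩)
      have := hz x hbz
      rw [gp, map_mul, aeval_X, aeval_X]
      rcases this with h | h
      · rw [h α, zero_mul]
      · rw [h β, mul_zero]
    rw [vanishingIdeal_zeroLocus_eq_radical] at hv
    exact hv
  -- uniform exponent
  let nf : Fin (a+1) × Fin (b+1) → ℕ := fun p => (hrad p.1 p.2).choose
  set N : ℕ := Finset.univ.sup nf with hN
  have hNpow : ∀ (α : Fin (a+1)) (β : Fin (b+1)), gp α β ^ (N + 1) ∈ I := by
    intro α β
    have h1 : nf (α, β) ≤ N := Finset.le_sup (Finset.mem_univ _)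
    have h2 : gp α β ^ nf (α, β) ∈ I := (hrad α β).choose_spec
    have h3 : gp α β ^ (N + 1) = gp α β ^ (N + 1 - nf (α, β)) * gp α β ^ nf (α, β) := by
      rw [← pow_add]
      congr 1
      omega
    rw [h3]
    exact I.mul_mem_left _ h2
  refine ⟨N, fun α β => ?_⟩
  have hmem : gp α β ^ (N + 1) ∈ Submodule.span (PA a b) (Set.range bf) := hNpow α β
  obtain ⟨cf, hcf⟩ := (Submodule.mem_span_range_iff_exists_fun (PA a b)).mp hmem
  -- first take balanced components
  have hbalpow : Bal (gp α β ^ (N+1)) := by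
    rw [gp_pow_eq_monomial]
    exact isWeightedHomogeneous_monomial _ _ _ (weight_single_pair α β (N+1))
  have hw2pow : IsWeightedHomogeneous (1 : σt a b → ℕ) (gp α β ^ (N+1)) (2*N+2) := by
    rw [gp_pow_eq_monomial]
    apply isWeightedHomogeneous_monomial
    rw [degw_single_pair]
    ring
  have step1 : gp α β ^ (N+1)
      = ∑ j, weightedHomogeneousComponent (wt a b) 0 (cf j) * bf j := by
    have e1 : gp α β ^ (N+1) = weightedHomogeneousComponent (wt a b) 0 (gp α β ^ (N+1)) :=
      (hbalpow.weightedHomogeneousComponent_same).symm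
    conv_lhs => rw [e1, ← hcf]
    rw [map_sum]
    apply Finset.sum_congr rfl
    intro j _
    rw [smul_eq_mul]
    have := weightedHomogeneousComponent_mul_right (wt a b) 0 0 (cf j) (bf j) (hbal j)
    rw [zero_add] at this
    rw [this]
  set hh : Fin c → PA a b := fun j =>
    weightedHomogeneousComponent (1 : σt a b → ℕ) (2*N)
      (weightedHomogeneousComponent (wt a b) 0 (cf j)) with hhh
  refine ⟨hh, fun j => bal_component (weightedHomogeneousComponent_isWeightedHomogeneous 0 _) _,
    fun j => totalDegree_wcomponent_le _ _, ?_⟩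
  have e2 : gp α β ^ (N+1)
      = weightedHomogeneousComponent (1 : σt a b → ℕ) (2*N+2) (gp α β ^ (N+1)) :=
    (hw2pow.weightedHomogeneousComponent_same).symm
  conv_lhs => rw [e2, step1]
  rw [map_sum]
  apply Finset.sum_congr rfl
  intro j _
  have := weightedHomogeneousComponent_mul_right (1 : σt a b → ℕ) (2*N) 2
    (weightedHomogeneousComponent (wt a b) 0 (cf j)) (bf j) (hhom j)
  rw [show 2*N+2 = 2*N + 2 from rfl]
  rw [this]

theorem bal_mul {a b : ℕ} {f g : PA a b} (hf : Bal f) (hg : Bal g) : Bal (f * g) := by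
  have := hf.mul hg; rwa [add_zero] at this

theorem bal_monomial {a b : ℕ} {ν : σt a b →₀ ℕ} (hν : Finsupp.weight (wt a b) ν = 0)
    (r : ℂ) : Bal (monomial ν r) :=
  isWeightedHomogeneous_monomial _ _ _ hν

/-- The subalgebra of balanced polynomials. -/
noncomputable def Walg (a b : ℕ) : Subalgebra ℂ (PA a b) :=
  (weightedHomogeneousSubmodule ℂ (wt a b) 0).toSubalgebra
    (isWeightedHomogeneous_one _ _)
    (fun _ _ hx hy => bal_mul hx hy)

theorem mem_Walg_iff {a b : ℕ} (f : PA a b) : f ∈ Walg a b ↔ Bal f := Iff.rfl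

theorem gp_isIntegral {a b c : ℕ} (N : ℕ) (bf : Fin c → PA a b)
    (hbal : ∀ j, Bal (bf j))
    (hpow : ∀ (α : Fin (a+1)) (β : Fin (b+1)), ∃ hh : Fin c → PA a b,
      (∀ j, Bal (hh j)) ∧ (∀ j, (hh j).totalDegree ≤ 2 * N) ∧
      gp α β ^ (N + 1) = ∑ j, hh j * bf j)
    (α : Fin (a+1)) (β : Fin (b+1)) :
    IsIntegral (Algebra.adjoin ℂ (Set.range bf)) (gp α β) := by
  classical
  set B := Algebra.adjoin ℂ (Set.range bf) with hB
  have hBle : B ≤ Walg a b := by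
    apply Algebra.adjoin_le
    rintro x ⟨j, rfl⟩
    exact hbal j
  have hBbal : ∀ x ∈ B, Bal x := fun x hx => hBle hx
  have hbfB : ∀ j, bf j ∈ B := fun j => Algebra.subset_adjoin ⟨j, rfl⟩
  have halg : algebraMap ↥B (PA a b) = B.val := rfl
  have hsmul : ∀ (r : ↥B) (x : PA a b), r • x = (r : PA a b) * x := by
    intro r x
    rw [Algebra.smul_def, halg]
    rfl
  -- the Bsub-submodule of balanced polynomials
  let WB : Submodule ↥B (PA a b) :=
    { carrier := {f | Bal f}
      add_mem' := fun hx hy => hx.add hy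
      zero_mem' := isWeightedHomogeneous_zero _ _ _
      smul_mem' := by
        intro r x hx
        rw [hsmul]
        exact bal_mul (hBbal _ r.2) hx }
  set D := 2 * (a + b + 2) * (N + 1) with hD
  -- generating set
  set Tset : Set (PA a b) :=
    {x | ∃ ν : σt a b →₀ ℕ, Finsupp.weight (wt a b) ν = 0 ∧ (ν.sum fun _ e => e) ≤ D ∧
      x = monomial ν 1} with hT
  have Tfin : Tset.Finite := by
    have h1 : {ν : σt a b →₀ ℕ | (ν.sum fun _ e => e) ≤ D}.Finite := by
      apply Set.Finite.subset (Set.finite_Iic (Finsupp.equivFunOnFinite.symm fun _ => D))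
      intro ν hν
      rw [Set.mem_Iic, Finsupp.le_def]
      intro s
      have h2 : ν s ≤ ν.degree := Finsupp.le_degree s ν
      have h3 : ν.degree = ν.sum fun _ e => e := rfl
      simp only [Finsupp.coe_equivFunOnFinite_symm]
      exact le_trans (h3 ▸ h2) hν
    apply Set.Finite.subset (h1.image (fun ν => (monomial ν 1 : PA a b)))
    rintro x ⟨ν, hν0, hνs, rfl⟩
    exact ⟨ν, hνs, rfl⟩
  -- main induction
  have key : ∀ d : ℕ, ∀ f : PA a b, Bal f → f.totalDegree ≤ d →
      f ∈ Submodule.span ↥B Tset := by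
    intro d
    induction d using Nat.strong_induction_on with
    | _ d IH =>
      intro f hf hdeg
      rw [MvPolynomial.as_sum f]
      apply Submodule.sum_mem
      intro μ hμ
      have hwμ : Finsupp.weight (wt a b) μ = 0 := hf (mem_support_iff.mp hμ)
      have hdμ : (μ.sum fun _ e => e) ≤ d := le_trans (le_totalDegree hμ) hdeg
      have hmono : (monomial μ 1 : PA a b) ∈ Submodule.span ↥B Tset := by
        by_cases hcase : ∃ (α' : Fin (a+1)) (β' : Fin (b+1)),
            N + 1 ≤ μ (Sum.inl α') ∧ N + 1 ≤ μ (Sum.inr β')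
        · obtain ⟨α', β', hα', hβ'⟩ := hcase
          set s₁ : σt a b →₀ ℕ := Finsupp.single (Sum.inl α') (N+1) with hs₁
          set s₂ : σt a b →₀ ℕ := Finsupp.single (Sum.inr β') (N+1) with hs₂
          have hle : s₁ + s₂ ≤ μ := by
            rw [Finsupp.le_def]
            intro s
            rw [Finsupp.add_apply, hs₁, hs₂]
            rcases s with p | q
            · rw [Finsupp.single_apply, Finsupp.single_apply]
              by_cases hp : α' = p
              · subst hp
                rw [if_pos rfl, if_neg (by simp)]
                omega
              · rw [if_neg (by simp [hp]), if_neg (by simp)]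
                simp
            · rw [Finsupp.single_apply, Finsupp.single_apply]
              by_cases hq : β' = q
              · subst hq
                rw [if_neg (by simp), if_pos rfl]
                omega
              · rw [if_neg (by simp), if_neg (by simp [hq])]
                simp
          set ν := μ - (s₁ + s₂) with hν
          have hadd : ν + (s₁ + s₂) = μ := tsub_add_cancel_of_le hle
          have hws : Finsupp.weight (wt a b) (s₁ + s₂) = 0 := by
            rw [map_add, hs₁, hs₂]
            show Finsupp.linearCombination ℕ (wt a b) _
              + Finsupp.linearCombination ℕ (wt a b) _ = 0
            rw [Finsupp.linearCombination_single, Finsupp.linearCombination_single]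
            simp only [wt, Sum.elim_inl, Sum.elim_inr, smul_eq_mul]
            ring
          have hwν : Finsupp.weight (wt a b) ν = 0 := by
            have := congrArg (Finsupp.weight (wt a b)) hadd
            rw [map_add, hws, add_zero] at this
            rw [this, hwμ]
          have hsums : (ν.sum fun _ e => e) + (2*N+2) = (μ.sum fun _ e => e) := by
            have := congrArg (fun τ : σt a b →₀ ℕ => τ.sum fun _ e => e) hadd
            rw [Finsupp.sum_add_index' (fun _ => rfl) (fun _ _ _ => rfl),
              Finsupp.sum_add_index' (fun _ => rfl) (fun _ _ _ => rfl),
              Finsupp.sum_single_index rfl, Finsupp.sum_single_index rfl] at this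
            omega
          obtain ⟨hh, hhbal, hhdeg, hheq⟩ := hpow α' β'
          have hgpow : (gp α' β' : PA a b) ^ (N+1) = monomial (s₁ + s₂) 1 := by
            rw [gp_eq_monomial, monomial_pow, one_pow, smul_add, Finsupp.smul_single,
              Finsupp.smul_single, smul_eq_mul, mul_one, hs₁, hs₂]
          have hdecomp : (monomial μ 1 : PA a b)
              = ∑ j, (monomial ν 1 * hh j) * bf j := by
            have : (monomial μ 1 : PA a b) = monomial ν 1 * monomial (s₁ + s₂) 1 := by
              rw [monomial_mul, mul_one, hadd]
            rw [this, ← hgpow, hheq, Finset.mul_sum]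
            apply Finset.sum_congr rfl
            intro j _
            ring
          rw [hdecomp]
          apply Submodule.sum_mem
          intro j _
          have hxj : (monomial ν 1 * hh j : PA a b) ∈ Submodule.span ↥B Tset := by
            have hbalx : Bal (monomial ν 1 * hh j) := bal_mul (bal_monomial hwν 1) (hhbal j)
            have h5 : (monomial ν 1 : PA a b).totalDegree ≤ ν.sum fun _ e => e :=
              totalDegree_monomial_le ν 1
            have hdegx : (monomial ν 1 * hh j).totalDegree ≤ d - 1 := by
              apply le_trans (totalDegree_mul _ _)
              have h6 := hhdeg j
              omega
            exact IH (d-1) (by omega) _ hbalx hdegx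
          have : (monomial ν 1 * hh j) * bf j = (⟨bf j, hbfB j⟩ : ↥B) • (monomial ν 1 * hh j) := by
            rw [hsmul]; ring
          rw [this]
          exact Submodule.smul_mem _ _ hxj
        · -- small degree case
          apply Submodule.subset_span
          refine ⟨μ, hwμ, ?_, rfl⟩
          have hbalμ := (bal_iff μ).mp hwμ
          have hμsum := musum_eq μ
          by_cases hP : ∀ p, μ (Sum.inl p) ≤ N
          · have h7 : (∑ p, μ (Sum.inl p)) ≤ (a+1) * N := by
              calc (∑ p, μ (Sum.inl p)) ≤ ∑ _p : Fin (a+1), N := Finset.sum_le_sum (fun p _ => hP p)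
              _ = (a+1) * N := by simp [Finset.sum_const, mul_comm]
            have h9 : 2 * ((a+1) * N) ≤ D := by
              rw [hD]
              have := Nat.mul_le_mul (show a+1 ≤ a+b+2 by omega) (show N ≤ N+1 by omega)
              calc 2 * ((a+1)*N) ≤ 2 * ((a+b+2)*(N+1)) := by omega
              _ = 2*(a+b+2)*(N+1) := by ring
            omega
          · push_neg at hP
            obtain ⟨p₀, hp₀⟩ := hP
            have hQ : ∀ q, μ (Sum.inr q) ≤ N := by
              intro q
              by_contra hq
              exact hcase ⟨p₀, q, by omega, by omega⟩
            have h7 : (∑ q, μ (Sum.inr q)) ≤ (b+1) * N := by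
              calc (∑ q, μ (Sum.inr q)) ≤ ∑ _q : Fin (b+1), N := Finset.sum_le_sum (fun q _ => hQ q)
              _ = (b+1) * N := by simp [Finset.sum_const, mul_comm]
            have h9 : 2 * ((b+1) * N) ≤ D := by
              rw [hD]
              have := Nat.mul_le_mul (show b+1 ≤ a+b+2 by omega) (show N ≤ N+1 by omega)
              calc 2 * ((b+1)*N) ≤ 2 * ((a+b+2)*(N+1)) := by omega
              _ = 2*(a+b+2)*(N+1) := by ring
            omega
      have h8 : (monomial μ (coeff μ f) : PA a b)
          = (⟨C (coeff μ f), B.algebraMap_mem _⟩ : ↥B) • monomial μ 1 := by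
        rw [hsmul]
        show monomial μ (coeff μ f) = C (coeff μ f) * monomial μ 1
        rw [C_mul_monomial, mul_one]
      rw [h8]
      exact Submodule.smul_mem _ _ hmono
  -- conclude
  have hWBfg : WB.FG := by
    rw [Submodule.fg_def]
    refine ⟨Tset, Tfin, le_antisymm ?_ ?_⟩
    · rw [Submodule.span_le]
      rintro x ⟨ν, hν0, _, rfl⟩
      exact bal_monomial hν0 1
    · intro f hf
      exact key f.totalDegree f hf le_rfl
  let Salg : Subalgebra ↥B (PA a b) :=
    WB.toSubalgebra (isWeightedHomogeneous_one _ _) (fun _ _ hx hy => bal_mul hx hy)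
  exact IsIntegral.of_mem_of_fg Salg hWBfg _ (bal_gp α β)

theorem pderiv_aeval_eq {σ τ : Type*} [Fintype τ] [DecidableEq σ] [DecidableEq τ]
    (F : τ → MvPolynomial σ ℂ) (s : σ) (ρ : MvPolynomial τ ℂ) :
    pderiv s (aeval F ρ) = ∑ v, aeval F (pderiv v ρ) * pderiv s (F v) := by
  induction ρ using MvPolynomial.induction_on with
  | C r => simp
  | add p q hp hq =>
    rw [map_add, map_add, hp, hq, ← Finset.sum_add_distrib]
    apply Finset.sum_congr rfl
    intro v _
    rw [map_add, map_add, add_mul]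
  | mul_X p i hp =>
    rw [map_mul, aeval_X, pderiv_mul, hp]
    symm
    calc ∑ v, aeval F (pderiv v (p * X i)) * pderiv s (F v)
        = ∑ v, (aeval F (pderiv v p) * F i * pderiv s (F v)
            + aeval F p * aeval F (pderiv v (X i)) * pderiv s (F v)) := by
          apply Finset.sum_congr rfl
          intro v _
          rw [pderiv_mul, map_add, map_mul, map_mul, aeval_X]
          ring
      _ = (∑ v, aeval F (pderiv v p) * F i * pderiv s (F v))
            + ∑ v, aeval F p * aeval F (pderiv v (X i)) * pderiv s (F v) :=
          Finset.sum_add_distrib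
      _ = (∑ v, aeval F (pderiv v p) * pderiv s (F v)) * F i
            + aeval F p * pderiv s (F i) := by
          congr 1
          · rw [Finset.sum_mul]
            apply Finset.sum_congr rfl
            intro v _
            ring
          · rw [Finset.sum_eq_single i]
            · rw [pderiv_X_self, map_one, mul_one]
            · intro v _ hv
              rw [pderiv_X_of_ne (Ne.symm hv), map_zero, mul_zero, zero_mul]
            · intro h
              exact absurd (Finset.mem_univ i) h

/-- Coefficient-wise inner partial derivative of a polynomial over `MvPolynomial`. -/
noncomputable def pdmap {τ : Type*} (j : τ)
    (P : Polynomial (MvPolynomial τ ℂ)) : Polynomial (MvPolynomial τ ℂ) :=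
  P.sum fun k q => Polynomial.C (pderiv j q) * Polynomial.X ^ k

theorem pdmap_add {τ : Type*} (j : τ) (P Q : Polynomial (MvPolynomial τ ℂ)) :
    pdmap j (P + Q) = pdmap j P + pdmap j Q := by
  unfold pdmap
  apply Polynomial.sum_add_index
  · intro n
    rw [map_zero, Polynomial.C_0, zero_mul]
  · intro n r₁ r₂
    rw [map_add, Polynomial.C_add, add_mul]

theorem pdmap_monomial {τ : Type*} (j : τ) (k : ℕ) (q : MvPolynomial τ ℂ) :
    pdmap j (Polynomial.monomial k q) = Polynomial.C (pderiv j q) * Polynomial.X ^ k := by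
  unfold pdmap
  apply Polynomial.sum_monomial_index
  rw [map_zero, Polynomial.C_0, zero_mul]

/-- Chain rule for two-level evaluation. -/
theorem pderiv_eval₂ {σ τ : Type*} [Fintype τ] [DecidableEq σ] [DecidableEq τ]
    (F : τ → MvPolynomial σ ℂ) (t : MvPolynomial σ ℂ) (s : σ)
    (P : Polynomial (MvPolynomial τ ℂ)) :
    pderiv s (Polynomial.eval₂ (aeval F).toRingHom t P)
      = Polynomial.eval₂ (aeval F).toRingHom t P.derivative * pderiv s t
        + ∑ j, Polynomial.eval₂ (aeval F).toRingHom t (pdmap j P) * pderiv s (F j) := by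
  induction P using Polynomial.induction_on' with
  | add P Q hP hQ =>
    rw [Polynomial.eval₂_add, map_add, hP, hQ, Polynomial.derivative_add,
      Polynomial.eval₂_add, add_mul]
    have : ∀ j, Polynomial.eval₂ (aeval F).toRingHom t (pdmap j (P + Q))
        = Polynomial.eval₂ (aeval F).toRingHom t (pdmap j P)
          + Polynomial.eval₂ (aeval F).toRingHom t (pdmap j Q) := by
      intro j
      rw [pdmap_add, Polynomial.eval₂_add]
    simp only [this, add_mul, Finset.sum_add_distrib]
    ring
  | monomial k q =>
    rw [Polynomial.eval₂_monomial, Polynomial.derivative_monomial, Polynomial.eval₂_monomial]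
    have h1 : ∀ j, Polynomial.eval₂ (aeval F).toRingHom t (pdmap j (Polynomial.monomial k q))
        = aeval F (pderiv j q) * t ^ k := by
      intro j
      rw [pdmap_monomial, Polynomial.eval₂_mul, Polynomial.eval₂_C, Polynomial.eval₂_X_pow]
      rfl
    simp only [h1]
    have hco : ((aeval F).toRingHom : MvPolynomial τ ℂ → MvPolynomial σ ℂ) q = aeval F q := rfl
    have hco2 : ((aeval F).toRingHom : MvPolynomial τ ℂ → MvPolynomial σ ℂ) (q * (k : MvPolynomial τ ℂ))
        = aeval F q * (k : MvPolynomial σ ℂ) := by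
      show aeval F (q * (k : MvPolynomial τ ℂ)) = _
      rw [map_mul, map_natCast]
    rw [hco, hco2, pderiv_mul, pderiv_pow, pderiv_aeval_eq F s q, Finset.sum_mul]
    rw [Finset.sum_congr rfl (fun v _ => show
      aeval F (pderiv v q) * pderiv s (F v) * t ^ k
        = aeval F (pderiv v q) * t ^ k * pderiv s (F v) by ring)]
    ring

theorem natCast_ne_zero_mv {τ : Type*} {n : ℕ} (hn : n ≠ 0) :
    (n : MvPolynomial τ ℂ) ≠ 0 := by
  intro h
  rw [← MvPolynomial.C_eq_coe_nat, ← map_zero (C : ℂ →+* MvPolynomial τ ℂ)] at h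
  have := C_injective τ ℂ h
  exact hn (by exact_mod_cast this)

theorem exists_grad_rel {a b c : ℕ} (bf : Fin c → PA a b) {t : PA a b}
    (hint : IsIntegral (Algebra.adjoin ℂ (Set.range bf)) t) :
    ∃ (E : PA a b) (F : Fin c → PA a b), E ≠ 0 ∧
      ∀ s, E * pderiv s t + ∑ j, F j * pderiv s (bf j) = 0 := by
  classical
  set B := Algebra.adjoin ℂ (Set.range bf) with hB
  set ev : Polynomial (MvPolynomial (Fin c) ℂ) → PA a b :=
    fun P => Polynomial.eval₂ (aeval bf).toRingHom t P with hev
  -- the main strong induction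
  have main : ∀ d : ℕ, ∀ P : Polynomial (MvPolynomial (Fin c) ℂ), P.natDegree ≤ d →
      ev P = 0 → aeval bf P.leadingCoeff ≠ 0 →
      ∃ (E : PA a b) (F : Fin c → PA a b), E ≠ 0 ∧
        ∀ s, E * pderiv s t + ∑ j, F j * pderiv s (bf j) = 0 := by
    intro d
    induction d using Nat.strong_induction_on with
    | _ d IH =>
      intro P hPd hP0 hPlead
      by_cases hdeg0 : P.natDegree = 0
      · exfalso
        obtain ⟨q, hq⟩ := Polynomial.natDegree_eq_zero.mp hdeg0
        have hlead : P.leadingCoeff = q := by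
          rw [← hq, Polynomial.leadingCoeff_C]
        have : ev P = aeval bf q := by
          rw [← hq, hev]
          simp only [Polynomial.eval₂_C]
          rfl
        rw [hP0] at this
        rw [hlead] at hPlead
        exact hPlead this.symm
      · set E := ev P.derivative with hE
        by_cases hE0 : E = 0
        · -- recurse with the derivative
          have hd1 : (P.natDegree : MvPolynomial (Fin c) ℂ) ≠ 0 := natCast_ne_zero_mv hdeg0
          have hleadne : P.leadingCoeff ≠ 0 := by
            intro h
            rw [h, map_zero] at hPlead
            exact hPlead rfl
          have hcoeffd : P.derivative.coeff (P.natDegree - 1)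
              = P.leadingCoeff * (P.natDegree : MvPolynomial (Fin c) ℂ) := by
            rw [Polynomial.coeff_derivative]
            have e1 : P.natDegree - 1 + 1 = P.natDegree := by omega
            have e2 : ((P.natDegree - 1 : ℕ) : MvPolynomial (Fin c) ℂ) + 1
                = (P.natDegree : MvPolynomial (Fin c) ℂ) := by
              rw [← Nat.cast_one (R := MvPolynomial (Fin c) ℂ), ← Nat.cast_add]
              congr 1
            rw [e1, e2]
            rfl
          have hcdne : P.derivative.coeff (P.natDegree - 1) ≠ 0 := by
            rw [hcoeffd]
            exact mul_ne_zero hleadne hd1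
          have hndd : P.derivative.natDegree = P.natDegree - 1 :=
            le_antisymm (Polynomial.natDegree_derivative_le P)
              (Polynomial.le_natDegree_of_ne_zero hcdne)
          have hlead' : aeval bf P.derivative.leadingCoeff ≠ 0 := by
            rw [Polynomial.leadingCoeff, hndd, hcoeffd, map_mul, map_natCast]
            apply mul_ne_zero hPlead
            exact natCast_ne_zero_mv hdeg0
          have hdlt : P.derivative.natDegree < d := by omega
          exact IH P.derivative.natDegree hdlt P.derivative le_rfl hE0 hlead'
        · refine ⟨E, fun j => ev (pdmap j P), hE0, fun s => ?_⟩
          have hcr := pderiv_eval₂ bf t s P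
          rw [show Polynomial.eval₂ (aeval bf).toRingHom t P = ev P from rfl, hP0,
            map_zero] at hcr
          exact hcr.symm
  -- construct the initial relation from integrality
  obtain ⟨p, hmonic, heval⟩ := hint
  have hrange : B = (aeval (R := ℂ) bf).range := Algebra.adjoin_range_eq_range_aeval (σ := Fin c) (f := bf) ℂ
  have hliftex : ∀ y : ↥B, ∃ q : MvPolynomial (Fin c) ℂ, aeval bf q = (y : PA a b) := by
    intro y
    have h2 : (y : PA a b) ∈ (aeval (R := ℂ) bf).range := by
      rw [← hrange]; exact y.2
    obtain ⟨q, hq⟩ := h2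
    exact ⟨q, hq⟩
  set lf : ↥B → MvPolynomial (Fin c) ℂ := fun y => (hliftex y).choose with hlf
  have hlfspec : ∀ y : ↥B, aeval bf (lf y) = (y : PA a b) := fun y => (hliftex y).choose_spec
  set P₀ : Polynomial (MvPolynomial (Fin c) ℂ) :=
    ∑ k ∈ Finset.range (p.natDegree + 1), Polynomial.C (lf (p.coeff k)) * Polynomial.X ^ k
    with hP₀
  have hP₀coeff : ∀ m, P₀.coeff m
      = if m ∈ Finset.range (p.natDegree + 1) then lf (p.coeff m) else 0 := by
    intro m
    rw [hP₀, Polynomial.finset_sum_coeff]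
    simp only [Polynomial.coeff_C_mul, Polynomial.coeff_X_pow, mul_ite, mul_one, mul_zero]
    rw [Finset.sum_ite_eq (Finset.range (p.natDegree + 1)) m (fun k => lf (p.coeff k))]
  have htop : aeval bf (P₀.coeff p.natDegree) = 1 := by
    rw [hP₀coeff, if_pos (by simp), hlfspec]
    rw [Polynomial.Monic.coeff_natDegree hmonic]
    rfl
  have hndP₀ : P₀.natDegree = p.natDegree := by
    apply le_antisymm
    · apply Polynomial.natDegree_le_iff_coeff_eq_zero.mpr
      intro m hm
      rw [hP₀coeff, if_neg (by simp; omega)]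
    · apply Polynomial.le_natDegree_of_ne_zero
      intro h0
      rw [h0, map_zero] at htop
      exact zero_ne_one htop
  have hleadP₀ : aeval bf P₀.leadingCoeff ≠ 0 := by
    rw [Polynomial.leadingCoeff, hndP₀, htop]
    exact one_ne_zero
  have hevP₀ : ev P₀ = 0 := by
    show Polynomial.eval₂ (aeval bf).toRingHom t P₀ = 0
    rw [hP₀, Polynomial.eval₂_finset_sum]
    have hterm : ∀ k, Polynomial.eval₂ (aeval bf).toRingHom t
        (Polynomial.C (lf (p.coeff k)) * Polynomial.X ^ k)
        = ((p.coeff k : PA a b)) * t ^ k := by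
      intro k
      rw [Polynomial.eval₂_mul, Polynomial.eval₂_C, Polynomial.eval₂_X_pow]
      congr 1
      exact hlfspec _
    simp only [hterm]
    rw [Polynomial.eval₂_eq_sum_range] at heval
    exact heval
  exact main P₀.natDegree P₀ le_rfl hevP₀ hleadP₀

theorem exists_field_emb (R : Type) [CommRing R] [IsDomain R] :
    ∃ (K : Type) (_ : Field K) (φ : R →+* K), Function.Injective φ :=
  ⟨FractionRing R, inferInstance, algebraMap R (FractionRing R),
    IsFractionRing.injective R (FractionRing R)⟩

theorem pderiv_gp_inl {a b : ℕ} (p : Fin (a+1)) (α : Fin (a + 1)) (β : Fin (b + 1)) :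
    pderiv (Sum.inl p : σt a b) (gp α β)
      = if α = p then X (Sum.inr β) else 0 := by
  classical
  rw [gp, pderiv_mul, pderiv_X_of_ne (show (Sum.inr β : σt a b) ≠ Sum.inl p by simp),
    mul_zero, add_zero]
  by_cases h : α = p
  · subst h
    rw [pderiv_X_self, one_mul, if_pos rfl]
  · rw [pderiv_X_of_ne (show (Sum.inl α : σt a b) ≠ Sum.inl p by simp [h]), zero_mul,
      if_neg h]

theorem pderiv_gp_inr {a b : ℕ} (q : Fin (b+1)) (α : Fin (a + 1)) (β : Fin (b + 1)) :
    pderiv (Sum.inr q : σt a b) (gp α β)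
      = if β = q then X (Sum.inl α) else 0 := by
  classical
  rw [gp, pderiv_mul, pderiv_X_of_ne (show (Sum.inl α : σt a b) ≠ Sum.inr q by simp),
    zero_mul, zero_add]
  by_cases h : β = q
  · subst h
    rw [pderiv_X_self, mul_one, if_pos rfl]
  · rw [pderiv_X_of_ne (show (Sum.inr β : σt a b) ≠ Sum.inr q by simp [h]), mul_zero,
      if_neg h]

set_option maxHeartbeats 1000000 in
set_option synthInstance.maxHeartbeats 400000 in
theorem poly_main {a b c : ℕ} (bf : Fin c → PA a b)
    (hbal : ∀ j, Bal (bf j))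
    (hhom : ∀ j, IsWeightedHomogeneous (1 : σt a b → ℕ) (bf j) 2)
    (hz : ∀ x : σt a b → ℂ, (∀ j, eval x (bf j) = 0) →
      (∀ p, x (Sum.inl p) = 0) ∨ (∀ q, x (Sum.inr q) = 0)) :
    a + b + 1 ≤ c := by
  classical
  by_contra hc
  push_neg at hc
  obtain ⟨N, hpow⟩ := exists_hpow bf hbal hhom hz
  have hint := gp_isIntegral N bf hbal hpow
  obtain ⟨L, instL, φ, hφinj⟩ := exists_field_emb (PA a b)
  set Grad : PA a b → (σt a b → L) := fun f s => φ (pderiv s f) with hGrad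
  set Wspan : Submodule L (σt a b → L) :=
    Submodule.span L (Set.range fun j => Grad (bf j)) with hWspan
  -- every product-pair gradient lies in the span
  have hmemgp : ∀ (α : Fin (a+1)) (β : Fin (b+1)), Grad (gp α β) ∈ Wspan := by
    intro α β
    obtain ⟨E, F, hE, hrel⟩ := exists_grad_rel bf (hint α β)
    have hφE : φ E ≠ 0 := fun h => hE (hφinj (by rw [h, map_zero]))
    have hgrad : Grad (gp α β) = ∑ j, (-(φ (F j)) / φ E) • Grad (bf j) := by
      funext s
      have h := congrArg φ (hrel s)
      rw [map_add, map_mul, map_sum, map_zero] at h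
      have h2 : ∀ j ∈ Finset.univ, φ (F j * pderiv s (bf j))
          = φ (F j) * Grad (bf j) s := fun j _ => by rw [map_mul]
      rw [Finset.sum_congr rfl h2] at h
      have h5 : Grad (gp α β) s = (φ E)⁻¹ * -(∑ j, φ (F j) * Grad (bf j) s) := by
        have h6 : φ E * Grad (gp α β) s = -(∑ j, φ (F j) * Grad (bf j) s) :=
          eq_neg_of_add_eq_zero_left h
        rw [← h6, inv_mul_cancel_left₀ hφE]
      calc Grad (gp α β) s = (φ E)⁻¹ * -(∑ j, φ (F j) * Grad (bf j) s) := h5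
        _ = ∑ j, (-(φ (F j)) / φ E) * Grad (bf j) s := by
            rw [← Finset.sum_neg_distrib, Finset.mul_sum]
            apply Finset.sum_congr rfl
            intro j _
            ring
        _ = (∑ j, (-(φ (F j)) / φ E) • Grad (bf j)) s := by
            rw [Finset.sum_apply]
            apply Finset.sum_congr rfl
            intro j _
            rw [Pi.smul_apply, smul_eq_mul]
    rw [hgrad]
    exact Submodule.sum_mem _ (fun j _ =>
      Submodule.smul_mem _ _ (Submodule.subset_span ⟨j, rfl⟩))
  -- the test family
  set Af : Option (Fin a ⊕ Fin b) → Fin (a+1) :=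
    fun x => x.elim 0 (Sum.elim (fun i => i.succ) (fun _ => 0)) with hAf
  set Bf : Option (Fin a ⊕ Fin b) → Fin (b+1) :=
    fun x => x.elim 0 (Sum.elim (fun _ => 0) (fun j => j.succ)) with hBf
  set tf : Option (Fin a ⊕ Fin b) → PA a b := fun x => gp (Af x) (Bf x) with htf
  have hmem : ∀ x, Grad (tf x) ∈ Wspan := fun x => hmemgp _ _
  set fam' : Option (Fin a ⊕ Fin b) → ↥Wspan := fun x => ⟨Grad (tf x), hmem x⟩ with hfam
  have hfinW : FiniteDimensional L ↥Wspan :=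
    FiniteDimensional.span_of_finite L (Set.finite_range _)
  have hrank : Module.finrank L ↥Wspan ≤ c := by
    have h1 := finrank_span_le_card (R := L) (Set.range fun j => Grad (bf j))
    have h2 : (Set.range fun j => Grad (bf j)).toFinset.card ≤ c := by
      rw [Set.toFinset_range]
      exact le_trans (Finset.card_image_le) (by simp)
    exact le_trans h1 h2
  have hnli : ¬ LinearIndependent L fam' := by
    intro h
    have h3 := h.fintype_card_le_finrank
    have h4 : Fintype.card (Option (Fin a ⊕ Fin b)) = a + b + 1 := by simp
    omega
  obtain ⟨g, hgsum, x₀, hgx₀⟩ := Fintype.not_linearIndependent_iff.mp hnli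
  have h0 : ∑ x, g x • Grad (tf x) = 0 := by
    have h1 := congrArg (Submodule.subtype Wspan) hgsum
    rw [map_sum, map_zero] at h1
    simpa using h1
  have hcoord : ∀ s, ∑ x, g x * φ (pderiv s (tf x)) = 0 := by
    intro s
    have h1 := congrFun h0 s
    rw [Finset.sum_apply] at h1
    simpa [Pi.smul_apply, smul_eq_mul] using h1
  have hXne : ∀ s : σt a b, φ (X s : PA a b) ≠ 0 := by
    intro s h
    exact (X_ne_zero (R := ℂ) s) (hφinj (by rw [h, map_zero]))
  -- step 1: inl-indexed coefficients vanish
  have hg1 : ∀ i : Fin a, g (some (Sum.inl i)) = 0 := by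
    intro i
    have h := hcoord (Sum.inl i.succ)
    rw [Finset.sum_eq_single (some (Sum.inl i))] at h
    · rw [show tf (some (Sum.inl i)) = gp i.succ 0 from rfl, pderiv_gp_inl, if_pos rfl] at h
      exact (mul_eq_zero.mp h).resolve_right (hXne _)
    · intro x _ hx
      have hne : Af x ≠ i.succ := by
        rcases x with _ | y
        · exact fun hco => (Fin.succ_ne_zero i) hco.symm
        rcases y with i' | j
        · intro hco
          exact hx (by rw [show i' = i from Fin.succ_inj.mp hco])
        · exact fun hco => (Fin.succ_ne_zero i) hco.symm
      rw [show tf x = gp (Af x) (Bf x) from rfl, pderiv_gp_inl, if_neg hne, map_zero,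
        mul_zero]
    · intro hmm
      exact absurd (Finset.mem_univ _) hmm
  have hg2 : ∀ j : Fin b, g (some (Sum.inr j)) = 0 := by
    intro j
    have h := hcoord (Sum.inr j.succ)
    rw [Finset.sum_eq_single (some (Sum.inr j))] at h
    · rw [show tf (some (Sum.inr j)) = gp 0 j.succ from rfl, pderiv_gp_inr, if_pos rfl] at h
      exact (mul_eq_zero.mp h).resolve_right (hXne _)
    · intro x _ hx
      have hne : Bf x ≠ j.succ := by
        rcases x with _ | y
        · exact fun hco => (Fin.succ_ne_zero j) hco.symm
        rcases y with i' | j'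
        · exact fun hco => (Fin.succ_ne_zero j) hco.symm
        · intro hco
          exact hx (by rw [show j' = j from Fin.succ_inj.mp hco])
      rw [show tf x = gp (Af x) (Bf x) from rfl, pderiv_gp_inr, if_neg hne, map_zero,
        mul_zero]
    · intro hmm
      exact absurd (Finset.mem_univ _) hmm
  have hg0 : g none = 0 := by
    have h := hcoord (Sum.inl 0)
    rw [Fintype.sum_option] at h
    have hrest : ∑ y : Fin a ⊕ Fin b, g (some y) * φ (pderiv (Sum.inl 0 : σt a b) (tf (some y))) = 0 := by
      apply Finset.sum_eq_zero
      intro y _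
      rcases y with i' | j'
      · rw [show tf (some (Sum.inl i')) = gp i'.succ 0 from rfl, pderiv_gp_inl,
          if_neg (Fin.succ_ne_zero i'), map_zero, mul_zero]
      · rw [hg2 j', zero_mul]
    rw [hrest, add_zero] at h
    rw [show tf none = gp 0 0 from rfl, pderiv_gp_inl, if_pos rfl] at h
    exact (mul_eq_zero.mp h).resolve_right (hXne _)
  rcases x₀ with _ | y
  · exact hgx₀ hg0
  rcases y with i | j
  · exact hgx₀ (hg1 i)
  · exact hgx₀ (hg2 j)

theorem eval_monomial_pair {a b : ℕ} (x : σt a b → ℂ) (s s' : σt a b) (r : ℂ) :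
    eval x (monomial (Finsupp.single s 1 + Finsupp.single s' 1) r) = r * (x s * x s') := by
  rw [eval_monomial]
  congr 1
  rw [Finsupp.prod_add_index (fun i _ => pow_zero (x i)) (fun i _ k l => pow_add (x i) k l)]
  simp [Finsupp.prod_single_index]

end Stmt15Aux

open Stmt15Aux

/-- an entangled subspace (containing no nonzero product vector)
of ℂ^{d₁} ⊗ ℂ^{d₂} has dimension at most (d₁ − 1)(d₂ − 1). -/
theorem stmt15 (d₁ d₂ : ℕ) (S : Submodule ℂ (EuclideanSpace ℂ (Fin d₁ × Fin d₂)))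
    (hS : ∀ x ∈ S, x ≠ 0 →
      ¬ ∃ (u : EuclideanSpace ℂ (Fin d₁)) (w : EuclideanSpace ℂ (Fin d₂)), x = tp u w) :
    Module.finrank ℂ S ≤ (d₁ - 1) * (d₂ - 1) := by
  classical
  by_contra hk
  push_neg at hk
  have hfinV : Module.finrank ℂ (EuclideanSpace ℂ (Fin d₁ × Fin d₂)) = d₁ * d₂ := by
    rw [finrank_euclideanSpace]
    simp
  have hSle : Module.finrank ℂ S ≤ d₁ * d₂ := hfinV ▸ S.finrank_le
  rcases Nat.eq_zero_or_pos d₁ with h1 | h1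
  · subst h1
    simp only [Nat.zero_mul, Nat.le_zero] at hSle
    omega
  rcases Nat.eq_zero_or_pos d₂ with h2 | h2
  · subst h2
    simp only [Nat.mul_zero, Nat.le_zero] at hSle
    omega
  obtain ⟨a, rfl⟩ : ∃ a, d₁ = a + 1 := ⟨d₁ - 1, by omega⟩
  obtain ⟨b, rfl⟩ : ∃ b, d₂ = b + 1 := ⟨d₂ - 1, by omega⟩
  have hk' : a * b < Module.finrank ℂ S := by simpa using hk
  set k := Module.finrank ℂ S with hkdef
  set c := (a+1)*(b+1) - k with hc
  have hexpand : (a+1)*(b+1) = a*b + a + b + 1 := by ring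
  have hcle : c ≤ a + b := by omega
  -- orthogonal complement and its basis
  haveI : FiniteDimensional ℂ ↥Sᗮ := inferInstance
  have hdim : Module.finrank ℂ ↥Sᗮ = c := by
    have h3 := Submodule.finrank_add_finrank_orthogonal S
    rw [hfinV] at h3
    omega
  set bas : Module.Basis (Fin c) ℂ ↥Sᗮ := (Module.finBasis ℂ ↥Sᗮ).reindex (finCongr hdim) with hbas
  set y : Fin c → EuclideanSpace ℂ (Fin (a+1) × Fin (b+1)) := fun j => (bas j : _) with hy
  have hmemS : ∀ x : EuclideanSpace ℂ (Fin (a+1) × Fin (b+1)),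
      (∀ j, (inner ℂ (y j) x : ℂ) = 0) → x ∈ S := by
    intro x hx
    have hX : x ∈ Sᗮᗮ := by
      intro u hu
      have hrep := bas.sum_repr ⟨u, hu⟩
      have hval : (∑ i, ((bas.repr ⟨u,hu⟩) i) • y i) = u := by
        have h4 := congrArg (Submodule.subtype Sᗮ) hrep
        rw [map_sum] at h4
        simpa [hy] using h4
      rw [← hval, sum_inner]
      apply Finset.sum_eq_zero
      intro i _
      rw [inner_smul_left, hx i, mul_zero]
    rwa [Submodule.orthogonal_orthogonal] at hX
  -- the bilinear forms
  set bf : Fin c → PA a b := fun j =>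
    ∑ p : Fin (a+1), ∑ q : Fin (b+1),
      monomial (Finsupp.single (Sum.inl p) 1 + Finsupp.single (Sum.inr q) 1)
        ((starRingEnd ℂ) (y j (p, q))) with hbf
  have hbal : ∀ j, Bal (bf j) := by
    intro j
    have : bf j ∈ weightedHomogeneousSubmodule ℂ (wt a b) 0 := by
      rw [hbf]
      apply Submodule.sum_mem
      intro p _
      apply Submodule.sum_mem
      intro q _
      rw [mem_weightedHomogeneousSubmodule]
      exact isWeightedHomogeneous_monomial _ _ _ (weight_single_pair p q 1)
    exact this
  have hhom : ∀ j, IsWeightedHomogeneous (1 : σt a b → ℕ) (bf j) 2 := by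
    intro j
    have : bf j ∈ weightedHomogeneousSubmodule ℂ (1 : σt a b → ℕ) 2 := by
      rw [hbf]
      apply Submodule.sum_mem
      intro p _
      apply Submodule.sum_mem
      intro q _
      rw [mem_weightedHomogeneousSubmodule]
      apply isWeightedHomogeneous_monomial
      rw [degw_single_pair]
    exact this
  -- eval identity
  have heval : ∀ (x : σt a b → ℂ) j,
      eval x (bf j) = (inner ℂ (y j) (tp (WithLp.toLp 2 fun p => x (Sum.inl p)) (WithLp.toLp 2 fun q => x (Sum.inr q))) : ℂ) := by
    intro x j
    rw [hbf]
    rw [map_sum]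
    rw [PiLp.inner_apply]
    rw [Fintype.sum_prod_type]
    apply Finset.sum_congr rfl
    intro p _
    rw [map_sum]
    apply Finset.sum_congr rfl
    intro q _
    rw [eval_monomial_pair]
    rw [RCLike.inner_apply']
    rfl
  -- zero locus condition
  have hz : ∀ x : σt a b → ℂ, (∀ j, eval x (bf j) = 0) →
      (∀ p, x (Sum.inl p) = 0) ∨ (∀ q, x (Sum.inr q) = 0) := by
    intro x hx
    by_contra hcon
    push_neg at hcon
    obtain ⟨⟨p₀, hp₀⟩, ⟨q₀, hq₀⟩⟩ := hcon
    set u : EuclideanSpace ℂ (Fin (a+1)) := WithLp.toLp 2 (fun p => x (Sum.inl p)) with hu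
    set w : EuclideanSpace ℂ (Fin (b+1)) := WithLp.toLp 2 (fun q => x (Sum.inr q)) with hw
    have hmem : tp u w ∈ S := by
      apply hmemS
      intro j
      rw [← heval x j]
      exact hx j
    have hne : tp u w ≠ 0 := by
      intro h
      have h5 := congrArg (fun v => v (p₀, q₀)) h
      have h6 : u p₀ * w q₀ = 0 := h5
      rcases mul_eq_zero.mp h6 with h7 | h7
      · exact hp₀ h7
      · exact hq₀ h7
    exact hS _ hmem hne ⟨u, w, rfl⟩
  have := poly_main bf hbal hhom hz
  omega
end

section
/- In ℂ² ⊗ ℂ², suppose v₁, v₂, v₃ are nonzero product vectors spanning a 3-dimensional subspace S whose orthogonal complement is spanned by an entangled unit vector |ψ⟩. Then for every n ≥ 1, there is no nonzero product vector in (ℂ²)^{⊗n} ⊗ (ℂ²)^{⊗n} (with respect to the bipartite cut grouping all first factors against all second factors, under the natural reordering isomorphism of (ℂ²⊗ℂ²)^{⊗n}) that is orthogonal to all n-fold tensor products v_{i₁} ⊗ v_{i₂} ⊗ ⋯ ⊗ v_{iₙ} of the vectors v₁, v₂, v₃. -/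
open scoped ComplexConjugate

/-- The pairing of a product `⊗ₖ x (c k)` with a tensor `a`. -/
noncomputable def Sn (n : ℕ) (x : Fin 3 → Fin 2 → ℂ) (c : Fin n → Fin 3)
    (a : (Fin n → Fin 2) → ℂ) : ℂ :=
  ∑ q : Fin n → Fin 2, conj (∏ k, x (c k) (q k)) * a q

/-- Contraction of the first tensor factor of `a` with `x i`. -/
noncomputable def ctr {n : ℕ} (x : Fin 3 → Fin 2 → ℂ) (i : Fin 3)
    (a : (Fin (n + 1) → Fin 2) → ℂ) : (Fin n → Fin 2) → ℂ :=
  fun q => ∑ t : Fin 2, conj (x i t) * a (Fin.cons t q)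

lemma Sn_cons {n : ℕ} (x : Fin 3 → Fin 2 → ℂ) (i : Fin 3) (c : Fin n → Fin 3)
    (a : (Fin (n + 1) → Fin 2) → ℂ) :
    Sn (n + 1) x (Fin.cons i c) a = Sn n x c (ctr x i a) := by
  calc Sn (n + 1) x (Fin.cons i c) a
      = ∑ tq : Fin 2 × (Fin n → Fin 2),
          conj (∏ k, x ((Fin.cons i c : Fin (n+1) → Fin 3) k)
              ((Fin.cons tq.1 tq.2 : Fin (n+1) → Fin 2) k)) *
            a (Fin.cons tq.1 tq.2) := by
        rw [Sn]
        exact (Fintype.sum_equiv (Fin.consEquiv (fun _ : Fin (n + 1) => Fin 2))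
          _ (fun q => conj (∏ k, x ((Fin.cons i c : Fin (n+1) → Fin 3) k) (q k)) * a q)
          (fun tq => rfl)).symm
    _ = ∑ t : Fin 2, ∑ q : Fin n → Fin 2,
          conj (x i t) * (conj (∏ k, x (c k) (q k)) * a (Fin.cons t q)) := by
        rw [Fintype.sum_prod_type]
        refine Finset.sum_congr rfl fun t _ => Finset.sum_congr rfl fun q _ => ?_
        rw [Fin.prod_univ_succ]
        simp only [Fin.cons_zero, Fin.cons_succ, map_mul]
        ring
    _ = Sn n x c (ctr x i a) := by
        rw [Finset.sum_comm, Sn]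
        refine Finset.sum_congr rfl fun q _ => ?_
        rw [ctr, Finset.mul_sum]
        refine Finset.sum_congr rfl fun t _ => ?_
        ring

lemma ortho2 (p q : Fin 2 → ℂ) (hd : p 0 * q 1 - p 1 * q 0 ≠ 0)
    (φ : Fin 2 → ℂ) (h1 : conj (p 0) * φ 0 + conj (p 1) * φ 1 = 0)
    (h2 : conj (q 0) * φ 0 + conj (q 1) * φ 1 = 0) : φ = 0 := by
  have hd' : conj (p 0) * conj (q 1) - conj (p 1) * conj (q 0) ≠ 0 := by
    intro h
    apply hd
    have := congrArg conj h
    simpa [map_sub, map_mul] using this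
  have h0 : φ 0 = 0 := by
    have hz : (conj (p 0) * conj (q 1) - conj (p 1) * conj (q 0)) * φ 0 = 0 := by
      linear_combination conj (q 1) * h1 - conj (p 1) * h2
    rcases mul_eq_zero.1 hz with h | h
    · exact absurd h hd'
    · exact h
  have h1' : φ 1 = 0 := by
    have hz : (conj (p 0) * conj (q 1) - conj (p 1) * conj (q 0)) * φ 1 = 0 := by
      linear_combination conj (p 0) * h2 - conj (q 0) * h1
    rcases mul_eq_zero.1 hz with h | h
    · exact absurd h hd'
    · exact h
  funext t; fin_cases t <;> simp [h0, h1']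

lemma ctr_all_zero {n : ℕ} (x : Fin 3 → Fin 2 → ℂ)
    (hx : ∀ i j, i ≠ j → x i 0 * x j 1 - x i 1 * x j 0 ≠ 0)
    (i j : Fin 3) (hij : i ≠ j) (a : (Fin (n + 1) → Fin 2) → ℂ)
    (hi : ctr x i a = 0) (hj : ctr x j a = 0) : a = 0 := by
  funext q'
  set φ : Fin 2 → ℂ := fun t => a (Fin.cons t (Fin.tail q')) with hφ
  have h1 : conj (x i 0) * φ 0 + conj (x i 1) * φ 1 = 0 := by
    have := congrFun hi (Fin.tail q')
    simpa [ctr, Fin.sum_univ_two, hφ] using this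
  have h2 : conj (x j 0) * φ 0 + conj (x j 1) * φ 1 = 0 := by
    have := congrFun hj (Fin.tail q')
    simpa [ctr, Fin.sum_univ_two, hφ] using this
  have hz := ortho2 (x i) (x j) (hx i j hij) φ h1 h2
  have ha : a q' = φ (q' 0) := by rw [hφ]; simp [Fin.cons_self_tail]
  rw [ha, hz]; rfl

lemma key (u w : Fin 3 → Fin 2 → ℂ)
    (hu : ∀ i j, i ≠ j → u i 0 * u j 1 - u i 1 * u j 0 ≠ 0)
    (hw : ∀ i j, i ≠ j → w i 0 * w j 1 - w i 1 * w j 0 ≠ 0) :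
    ∀ n (a b : (Fin n → Fin 2) → ℂ), a ≠ 0 → b ≠ 0 →
      ∃ c : Fin n → Fin 3, Sn n u c a ≠ 0 ∧ Sn n w c b ≠ 0 := by
  intro n
  induction n with
  | zero =>
    intro a b ha hb
    have base : ∀ (x : Fin 3 → Fin 2 → ℂ) (c : Fin 0 → Fin 3) (f : (Fin 0 → Fin 2) → ℂ),
        f ≠ 0 → Sn 0 x c f ≠ 0 := by
      intro x c f hf h
      apply hf
      funext q
      have h2 : Sn 0 x c f = f q := by
        rw [Sn, Fintype.sum_subsingleton _ q]
        simp
      show f q = 0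
      rw [← h2]
      exact h
    exact ⟨fun k => k.elim0, base u _ a ha, base w _ b hb⟩
  | succ n ih =>
    intro a b ha hb
    have hex : ∃ i, ctr u i a ≠ 0 ∧ ctr w i b ≠ 0 := by
      by_contra hc
      push_neg at hc
      have h' : ∀ i, ctr u i a = 0 ∨ ctr w i b = 0 := by
        intro i
        by_cases hA : ctr u i a = 0
        · exact Or.inl hA
        · exact Or.inr (hc i hA)
      rcases h' 0 with h0 | h0 <;> rcases h' 1 with h1 | h1 <;> rcases h' 2 with h2 | h2
      · exact ha (ctr_all_zero u hu 0 1 (by decide) a h0 h1)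
      · exact ha (ctr_all_zero u hu 0 1 (by decide) a h0 h1)
      · exact ha (ctr_all_zero u hu 0 2 (by decide) a h0 h2)
      · exact hb (ctr_all_zero w hw 1 2 (by decide) b h1 h2)
      · exact ha (ctr_all_zero u hu 1 2 (by decide) a h1 h2)
      · exact hb (ctr_all_zero w hw 0 2 (by decide) b h0 h2)
      · exact hb (ctr_all_zero w hw 0 1 (by decide) b h0 h1)
      · exact hb (ctr_all_zero w hw 0 1 (by decide) b h0 h1)
    obtain ⟨i, hia, hib⟩ := hex
    obtain ⟨c, hc1, hc2⟩ := ih (ctr u i a) (ctr w i b) hia hib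
    exact ⟨Fin.cons i c, by rw [Sn_cons]; exact hc1, by rw [Sn_cons]; exact hc2⟩

lemma inner_tp (f : EuclideanSpace ℂ (Fin 2 × Fin 2)) (x y : Fin 2 → ℂ)
    (u' w' : Fin 2 → ℂ) (hf : f = tp (WithLp.toLp 2 u') (WithLp.toLp 2 w')) :
    inner ℂ f (tp (WithLp.toLp 2 x) (WithLp.toLp 2 y)) = (∑ s, conj (u' s) * x s) * (∑ t, conj (w' t) * y t) := by
  subst hf
  rw [PiLp.inner_apply]
  rw [Fintype.sum_prod_type, Finset.sum_mul_sum]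
  refine Finset.sum_congr rfl fun s _ => Finset.sum_congr rfl fun t _ => ?_
  simp only [tp, PiLp.toLp_apply, RCLike.inner_apply, map_mul]
  ring

lemma tp_ne_zero (x y : EuclideanSpace ℂ (Fin 2)) (hx : x ≠ 0) (hy : y ≠ 0) :
    tp x y ≠ 0 := by
  obtain ⟨s, hs⟩ := Function.ne_iff.1 ((not_congr (WithLp.ofLp_eq_zero 2)).2 hx)
  obtain ⟨t, ht⟩ := Function.ne_iff.1 ((not_congr (WithLp.ofLp_eq_zero 2)).2 hy)
  intro h
  have := congrArg (fun f => f (s, t)) h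
  exact (mul_ne_zero hs ht) this

lemma no_orth (v : Fin 3 → EuclideanSpace ℂ (Fin 2 × Fin 2))
    (ψ : EuclideanSpace ℂ (Fin 2 × Fin 2))
    (hent : ¬ ∃ (u : EuclideanSpace ℂ (Fin 2)) (w : EuclideanSpace ℂ (Fin 2)), ψ = tp u w)
    (hcomp : (Submodule.span ℂ (Set.range v))ᗮ = (ℂ ∙ ψ))
    (x y : EuclideanSpace ℂ (Fin 2)) (hx : x ≠ 0) (hy : y ≠ 0)
    (hortho : ∀ m, inner ℂ (v m) (tp x y) = (0 : ℂ)) : False := by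
  have hmem : tp x y ∈ (Submodule.span ℂ (Set.range v))ᗮ := by
    rw [Submodule.mem_orthogonal]
    intro z hz
    induction hz using Submodule.span_induction with
    | mem z hz => obtain ⟨m, rfl⟩ := hz; exact hortho m
    | zero => simp
    | add z₁ z₂ _ _ h1 h2 => rw [inner_add_left, h1, h2, add_zero]
    | smul c z _ h => rw [inner_smul_left, h, mul_zero]
  rw [hcomp, Submodule.mem_span_singleton] at hmem
  obtain ⟨cc, hcc⟩ := hmem
  have hccne : cc ≠ 0 := by
    rintro rfl
    exact tp_ne_zero x y hx hy (by rw [← hcc, zero_smul])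
  apply hent
  refine ⟨cc⁻¹ • x, y, ?_⟩
  have hψ : ψ = cc⁻¹ • tp x y := by
    rw [← hcc, smul_smul, inv_mul_cancel₀ hccne, one_smul]
  rw [hψ]
  ext p
  show cc⁻¹ * (x p.1 * y p.2) = (cc⁻¹ * x p.1) * y p.2
  ring

/-- The vector orthogonal to `z` in `ℂ²`. -/
noncomputable def pv (z : Fin 2 → ℂ) : Fin 2 → ℂ := ![conj (z 1), -(conj (z 0))]

lemma pv_ne (z : Fin 2 → ℂ) (hz : z ≠ 0) : pv z ≠ 0 := by
  obtain ⟨s, hs⟩ := Function.ne_iff.1 hz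
  intro h
  apply hs
  fin_cases s
  · have := congrFun h 1
    simp only [pv, Matrix.cons_val_one, Matrix.head_cons, Pi.zero_apply, neg_eq_zero] at this
    simpa using congrArg conj this
  · have := congrFun h 0
    simp only [pv, Matrix.cons_val_zero, Pi.zero_apply] at this
    simpa using congrArg conj this

lemma dot_pv (z z' : Fin 2 → ℂ) :
    ∑ s, conj (z' s) * pv z s = conj (z' 0 * z 1 - z' 1 * z 0) := by
  rw [Fin.sum_univ_two]
  simp only [pv, Matrix.cons_val_zero, Matrix.cons_val_one, Matrix.head_cons,
    map_sub, map_mul]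
  ring

lemma third : ∀ i j : Fin 3, i ≠ j → ∃ k : Fin 3, ∀ m : Fin 3, m = i ∨ m = j ∨ m = k := by
  decide

lemma det_ne (v : Fin 3 → EuclideanSpace ℂ (Fin 2 × Fin 2))
    (ψ : EuclideanSpace ℂ (Fin 2 × Fin 2))
    (hent : ¬ ∃ (u : EuclideanSpace ℂ (Fin 2)) (w : EuclideanSpace ℂ (Fin 2)), ψ = tp u w)
    (hcomp : (Submodule.span ℂ (Set.range v))ᗮ = (ℂ ∙ ψ))
    (u w : Fin 3 → Fin 2 → ℂ) (hv : ∀ i, v i = tp (WithLp.toLp 2 (u i)) (WithLp.toLp 2 (w i)))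
    (hune : ∀ i, u i ≠ 0) (hwne : ∀ i, w i ≠ 0) :
    (∀ i j, i ≠ j → u i 0 * u j 1 - u i 1 * u j 0 ≠ 0) ∧
    (∀ i j, i ≠ j → w i 0 * w j 1 - w i 1 * w j 0 ≠ 0) := by
  constructor
  · intro i j hij hd
    obtain ⟨k, hk⟩ := third i j hij
    refine no_orth v ψ hent hcomp (WithLp.toLp 2 (pv (u i))) (WithLp.toLp 2 (pv (w k)))
      (fun h => pv_ne _ (hune i) (congrArg WithLp.ofLp h))
      (fun h => pv_ne _ (hwne k) (congrArg WithLp.ofLp h))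
      (fun m => ?_)
    rw [inner_tp (v m) _ _ (u m) (w m) (hv m), dot_pv, dot_pv]
    rcases hk m with rfl | rfl | rfl
    · rw [show u m 0 * u m 1 - u m 1 * u m 0 = 0 by ring, map_zero, zero_mul]
    · rw [show u m 0 * u i 1 - u m 1 * u i 0 = -(u i 0 * u m 1 - u i 1 * u m 0) by ring, hd]
      simp
    · rw [show w m 0 * w m 1 - w m 1 * w m 0 = 0 by ring, map_zero, mul_zero]
  · intro i j hij hd
    obtain ⟨k, hk⟩ := third i j hij
    refine no_orth v ψ hent hcomp (WithLp.toLp 2 (pv (u k))) (WithLp.toLp 2 (pv (w i)))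
      (fun h => pv_ne _ (hune k) (congrArg WithLp.ofLp h))
      (fun h => pv_ne _ (hwne i) (congrArg WithLp.ofLp h))
      (fun m => ?_)
    rw [inner_tp (v m) _ _ (u m) (w m) (hv m), dot_pv, dot_pv]
    rcases hk m with rfl | rfl | rfl
    · rw [show w m 0 * w m 1 - w m 1 * w m 0 = 0 by ring, map_zero, mul_zero]
    · rw [show w m 0 * w i 1 - w m 1 * w i 0 = -(w i 0 * w m 1 - w i 1 * w m 0) by ring, hd]
      simp
    · rw [show u m 0 * u m 1 - u m 1 * u m 0 = 0 by ring, map_zero, zero_mul]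

lemma factor (n : ℕ) (v : Fin 3 → EuclideanSpace ℂ (Fin 2 × Fin 2))
    (u w : Fin 3 → Fin 2 → ℂ) (hv : ∀ i, v i = tp (WithLp.toLp 2 (u i)) (WithLp.toLp 2 (w i)))
    (c : Fin n → Fin 3) (a b : (Fin n → Fin 2) → ℂ) :
    (∑ p : Fin n → Fin 2 × Fin 2,
      conj (∏ k, v (c k) (p k)) * (a (fun k => (p k).1) * b (fun k => (p k).2))) =
    Sn n u c a * Sn n w c b := by
  calc (∑ p : Fin n → Fin 2 × Fin 2,
        conj (∏ k, v (c k) (p k)) * (a (fun k => (p k).1) * b (fun k => (p k).2)))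
      = ∑ qr : (Fin n → Fin 2) × (Fin n → Fin 2),
          conj (∏ k, v (c k) (qr.1 k, qr.2 k)) * (a qr.1 * b qr.2) :=
        (Fintype.sum_equiv (Equiv.arrowProdEquivProdArrow (Fin n) (fun _ => Fin 2) (fun _ => Fin 2)).symm
          (fun qr => conj (∏ k, v (c k) (qr.1 k, qr.2 k)) * (a qr.1 * b qr.2))
          (fun p => conj (∏ k, v (c k) (p k)) *
            (a (fun k => (p k).1) * b (fun k => (p k).2)))
          (fun qr => rfl)).symm
    _ = ∑ q : Fin n → Fin 2, ∑ r : Fin n → Fin 2,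
          (conj (∏ k, u (c k) (q k)) * a q) * (conj (∏ k, w (c k) (r k)) * b r) := by
        rw [Fintype.sum_prod_type]
        refine Finset.sum_congr rfl fun q _ => Finset.sum_congr rfl fun r _ => ?_
        simp only [hv]
        have : ∀ k, tp (WithLp.toLp 2 (u (c k))) (WithLp.toLp 2 (w (c k))) (q k, r k) =
            u (c k) (q k) * w (c k) (r k) := fun k => rfl
        simp only [this]
        rw [Finset.prod_mul_distrib, map_mul]
        ring
    _ = Sn n u c a * Sn n w c b := by
        rw [Sn, Sn, Finset.sum_mul_sum]

/-- if v₁, v₂, v₃ are nonzero product vectors spanning a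
3-dimensional subspace of ℂ²⊗ℂ² whose orthogonal complement is spanned by an
entangled unit vector ψ, then for every n ≥ 1 there is no nonzero product
vector, with respect to the bipartite cut grouping all first factors against
all second factors, orthogonal to all n-fold tensor products of the vᵢ's. -/
theorem stmt19 (v : Fin 3 → EuclideanSpace ℂ (Fin 2 × Fin 2))
    (hvprod : ∀ i, v i ≠ 0 ∧
      ∃ (u : EuclideanSpace ℂ (Fin 2)) (w : EuclideanSpace ℂ (Fin 2)), v i = tp u w)
    (ψ : EuclideanSpace ℂ (Fin 2 × Fin 2)) (hψn : ‖ψ‖ = 1)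
    (hent : ¬ ∃ (u : EuclideanSpace ℂ (Fin 2)) (w : EuclideanSpace ℂ (Fin 2)), ψ = tp u w)
    (hdim : Module.finrank ℂ (Submodule.span ℂ (Set.range v)) = 3)
    (hcomp : (Submodule.span ℂ (Set.range v))ᗮ = (ℂ ∙ ψ)) :
    ∀ n : ℕ, 1 ≤ n →
      ¬ ∃ (a b : (Fin n → Fin 2) → ℂ), a ≠ 0 ∧ b ≠ 0 ∧
        ∀ c : Fin n → Fin 3,
          (∑ p : Fin n → Fin 2 × Fin 2,
            conj (∏ k, v (c k) (p k)) *
              (a (fun k => (p k).1) * b (fun k => (p k).2))) = 0 := by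
  intro n hn
  rintro ⟨a, b, ha, hb, hsum⟩
  choose u w hv using fun i => (hvprod i).2
  have hvne : ∀ i, v i ≠ 0 := fun i => (hvprod i).1
  have hune : ∀ i, (u i : Fin 2 → ℂ) ≠ 0 := by
    intro i h
    apply hvne i
    rw [hv i]
    ext p
    show u i p.1 * w i p.2 = 0
    rw [show u i p.1 = 0 from congrFun h p.1, zero_mul]
  have hwne : ∀ i, (w i : Fin 2 → ℂ) ≠ 0 := by
    intro i h
    apply hvne i
    rw [hv i]
    ext p
    show u i p.1 * w i p.2 = 0
    rw [show w i p.2 = 0 from congrFun h p.2, mul_zero]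
  obtain ⟨hu, hw⟩ := det_ne v ψ hent hcomp (fun i => u i) (fun i => w i) hv hune hwne
  obtain ⟨c, hc1, hc2⟩ := key (fun i => u i) (fun i => w i) hu hw n a b ha hb
  have h0 := hsum c
  rw [factor n v (fun i => u i) (fun i => w i) hv c a b] at h0
  exact (mul_ne_zero hc1 hc2) h0
end
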